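/- Nonstationary exact solution with α = 0: Let d₁, d₂ be real, d₃ ≠ 0, C₂ a real constant, and F : ℝ → ℝ any differentiable function. Then the functions u(t,x,y) = 4d₂/(x²+y²), v(t,x,y) = 4d₁/(x²+y²), w(t,x,y) = (C₂/t)·exp(−(x²+y²)/(4d₃t)) − 4d₁d₂/(d₃(x²+y²)) satisfy the system u_t + 2F′(x²+y²)(x u_y − y u_x) = d₁(u_xx + u_yy) − uv, v_t + 2F′(x²+y²)(x v_y − y v_x) = d₂(v_xx + v_yy) − uv, w_t + 2F′(x²+y²)(x w_y − y w_x) = d₃(w_xx + w_yy) + uv, at every point (t,x,y) with t > 0 and (x,y) ≠ (0,0). -/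

import Mathlib

/-- Partial derivative with respect to `t` of a function of `(t,x,y)`. -/
noncomputable def pdT (f : ℝ × ℝ × ℝ → ℝ) (p : ℝ × ℝ × ℝ) : ℝ := fderiv ℝ f p (1, 0, 0)
/-- Partial derivative with respect to `x`. -/
noncomputable def pdX (f : ℝ × ℝ × ℝ → ℝ) (p : ℝ × ℝ × ℝ) : ℝ := fderiv ℝ f p (0, 1, 0)
/-- Partial derivative with respect to `y`. -/
noncomputable def pdY (f : ℝ × ℝ × ℝ → ℝ) (p : ℝ × ℝ × ℝ) : ℝ := fderiv ℝ f p (0, 0, 1)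

/-- `(u,v,w)` solves the convective Lotka–Volterra system (`k = 1`) with radially
symmetric stream function `Ψ = F(x²+y²)`; here `F'` denotes the derivative of `F`. -/
def SolvesRadial (d₁ d₂ d₃ : ℝ) (F' : ℝ → ℝ) (u v w : ℝ × ℝ × ℝ → ℝ)
    (Ω : Set (ℝ × ℝ × ℝ)) : Prop :=
  ∀ p ∈ Ω,
    (pdT u p + 2 * F' (p.2.1 ^ 2 + p.2.2 ^ 2) * (p.2.1 * pdY u p - p.2.2 * pdX u p)
      = d₁ * (pdX (pdX u) p + pdY (pdY u) p) - u p * v p) ∧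
    (pdT v p + 2 * F' (p.2.1 ^ 2 + p.2.2 ^ 2) * (p.2.1 * pdY v p - p.2.2 * pdX v p)
      = d₂ * (pdX (pdX v) p + pdY (pdY v) p) - u p * v p) ∧
    (pdT w p + 2 * F' (p.2.1 ^ 2 + p.2.2 ^ 2) * (p.2.1 * pdY w p - p.2.2 * pdX w p)
      = d₃ * (pdX (pdX w) p + pdY (pdY w) p) + u p * v p)

open Real Filter

lemma pdT_eq {f : ℝ × ℝ × ℝ → ℝ} {p : ℝ × ℝ × ℝ} (h : DifferentiableAt ℝ f p) :
    pdT f p = deriv (fun s => f (p.1 + s, p.2.1, p.2.2)) 0 := by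
  rw [pdT, ← h.lineDeriv_eq_fderiv, lineDeriv]
  congr 1; ext s; congr 1; simp [Prod.ext_iff]

lemma pdX_eq {f : ℝ × ℝ × ℝ → ℝ} {p : ℝ × ℝ × ℝ} (h : DifferentiableAt ℝ f p) :
    pdX f p = deriv (fun s => f (p.1, p.2.1 + s, p.2.2)) 0 := by
  rw [pdX, ← h.lineDeriv_eq_fderiv, lineDeriv]
  congr 1; ext s; congr 1; simp [Prod.ext_iff]

lemma pdY_eq {f : ℝ × ℝ × ℝ → ℝ} {p : ℝ × ℝ × ℝ} (h : DifferentiableAt ℝ f p) :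
    pdY f p = deriv (fun s => f (p.1, p.2.1, p.2.2 + s)) 0 := by
  rw [pdY, ← h.lineDeriv_eq_fderiv, lineDeriv]
  congr 1; ext s; congr 1; simp [Prod.ext_iff]

lemma Rne (q : ℝ × ℝ × ℝ) (h : q.2 ≠ 0) : q.2.1 ^ 2 + q.2.2 ^ 2 ≠ 0 := by
  intro h0
  apply h
  have h1 : q.2.1 = 0 := by nlinarith [sq_nonneg q.2.1, sq_nonneg q.2.2]
  have h2 : q.2.2 = 0 := by nlinarith [sq_nonneg q.2.1, sq_nonneg q.2.2]
  simp [Prod.ext_iff, h1, h2]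

-- 1D derivative lemmas
lemma D1x (c x y : ℝ) (hR : x ^ 2 + y ^ 2 ≠ 0) :
    deriv (fun s => c / ((x + s) ^ 2 + y ^ 2)) 0 = -(2 * c * x) / ((x ^ 2 + y ^ 2) ^ 2) := by
  have hx : HasDerivAt (fun s : ℝ => x + s) 1 0 := (hasDerivAt_id 0).const_add x
  have h := (hasDerivAt_const (0:ℝ) c).div ((hx.pow 2).add_const (y ^ 2))
    (by simp only [Pi.pow_apply, add_zero]; exact hR)
  erw [h.deriv]
  norm_num
  ring

lemma D1y (c x y : ℝ) (hR : x ^ 2 + y ^ 2 ≠ 0) :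
    deriv (fun s => c / (x ^ 2 + (y + s) ^ 2)) 0 = -(2 * c * y) / ((x ^ 2 + y ^ 2) ^ 2) := by
  have hy : HasDerivAt (fun s : ℝ => y + s) 1 0 := (hasDerivAt_id 0).const_add y
  have h := (hasDerivAt_const (0:ℝ) c).div ((hy.pow 2).const_add (x ^ 2))
    (by simp only [Pi.pow_apply, add_zero]; exact hR)
  erw [h.deriv]
  norm_num
  ring

lemma D2x (c x y : ℝ) (hR : x ^ 2 + y ^ 2 ≠ 0) :
    deriv (fun s => -(2 * c * (x + s)) / (((x + s) ^ 2 + y ^ 2) ^ 2)) 0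
      = (8 * c * x ^ 2 - 2 * c * (x ^ 2 + y ^ 2)) / ((x ^ 2 + y ^ 2) ^ 3) := by
  have hx : HasDerivAt (fun s : ℝ => x + s) 1 0 := (hasDerivAt_id 0).const_add x
  have h := ((hx.const_mul (2 * c)).neg).div (((hx.pow 2).add_const (y ^ 2)).pow 2)
    (by simp only [Pi.pow_apply, add_zero]; exact pow_ne_zero 2 hR)
  erw [h.deriv]
  norm_num
  field_simp
  ring

lemma D2y (c x y : ℝ) (hR : x ^ 2 + y ^ 2 ≠ 0) :
    deriv (fun s => -(2 * c * (y + s)) / ((x ^ 2 + (y + s) ^ 2) ^ 2)) 0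
      = (8 * c * y ^ 2 - 2 * c * (x ^ 2 + y ^ 2)) / ((x ^ 2 + y ^ 2) ^ 3) := by
  have hy : HasDerivAt (fun s : ℝ => y + s) 1 0 := (hasDerivAt_id 0).const_add y
  have h := ((hy.const_mul (2 * c)).neg).div (((hy.pow 2).const_add (x ^ 2)).pow 2)
    (by simp only [Pi.pow_apply, add_zero]; exact pow_ne_zero 2 hR)
  erw [h.deriv]
  norm_num
  field_simp
  ring

lemma DTw (d₁ d₂ d₃ C₂ t x y : ℝ) (ht : t ≠ 0) (hd₃ : d₃ ≠ 0) :
    deriv (fun s => C₂ / (t + s) * Real.exp (-(x ^ 2 + y ^ 2) / (4 * d₃ * (t + s)))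
        - 4 * d₁ * d₂ / (d₃ * (x ^ 2 + y ^ 2))) 0
      = (C₂ * (x ^ 2 + y ^ 2) / (4 * d₃ * t ^ 3) - C₂ / t ^ 2)
          * Real.exp (-(x ^ 2 + y ^ 2) / (4 * d₃ * t)) := by
  have hts : HasDerivAt (fun s : ℝ => t + s) 1 0 := (hasDerivAt_id 0).const_add t
  have ht0 : t + 0 ≠ 0 := by simpa using ht
  have hden : 4 * d₃ * (t + 0) ≠ 0 := by
    simp only [add_zero]; exact mul_ne_zero (mul_ne_zero four_ne_zero hd₃) ht
  have hC := (hasDerivAt_const (0:ℝ) C₂).div hts ht0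
  have hA := (hasDerivAt_const (0:ℝ) (-(x ^ 2 + y ^ 2))).div (hts.const_mul (4 * d₃)) hden
  have h := (hC.mul hA.exp).sub_const (4 * d₁ * d₂ / (d₃ * (x ^ 2 + y ^ 2)))
  erw [h.deriv]
  norm_num
  field_simp
  ring

lemma DXw (d₁ d₂ d₃ C₂ t x y : ℝ) (ht : t ≠ 0) (hd₃ : d₃ ≠ 0) (hR : x ^ 2 + y ^ 2 ≠ 0) :
    deriv (fun s => C₂ / t * Real.exp (-((x + s) ^ 2 + y ^ 2) / (4 * d₃ * t))
        - 4 * d₁ * d₂ / (d₃ * ((x + s) ^ 2 + y ^ 2))) 0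
      = -(C₂ * x / (2 * d₃ * t ^ 2)) * Real.exp (-(x ^ 2 + y ^ 2) / (4 * d₃ * t))
          + 8 * d₁ * d₂ * x / (d₃ * (x ^ 2 + y ^ 2) ^ 2) := by
  have hx : HasDerivAt (fun s : ℝ => x + s) 1 0 := (hasDerivAt_id 0).const_add x
  have hA := (((hx.pow 2).add_const (y ^ 2)).neg).div_const (4 * d₃ * t)
  have hden : d₃ * ((x + 0) ^ 2 + y ^ 2) ≠ 0 := by
    simp only [add_zero]; exact mul_ne_zero hd₃ hR
  have hQ := (hasDerivAt_const (0:ℝ) (4 * d₁ * d₂)).div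
    (((hx.pow 2).add_const (y ^ 2)).const_mul d₃) hden
  have h := ((hA.exp).const_mul (C₂ / t)).sub hQ
  erw [h.deriv]
  norm_num
  field_simp
  ring

lemma DYw (d₁ d₂ d₃ C₂ t x y : ℝ) (ht : t ≠ 0) (hd₃ : d₃ ≠ 0) (hR : x ^ 2 + y ^ 2 ≠ 0) :
    deriv (fun s => C₂ / t * Real.exp (-(x ^ 2 + (y + s) ^ 2) / (4 * d₃ * t))
        - 4 * d₁ * d₂ / (d₃ * (x ^ 2 + (y + s) ^ 2))) 0
      = -(C₂ * y / (2 * d₃ * t ^ 2)) * Real.exp (-(x ^ 2 + y ^ 2) / (4 * d₃ * t))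
          + 8 * d₁ * d₂ * y / (d₃ * (x ^ 2 + y ^ 2) ^ 2) := by
  have hy : HasDerivAt (fun s : ℝ => y + s) 1 0 := (hasDerivAt_id 0).const_add y
  have hA := (((hy.pow 2).const_add (x ^ 2)).neg).div_const (4 * d₃ * t)
  have hden : d₃ * (x ^ 2 + (y + 0) ^ 2) ≠ 0 := by
    simp only [add_zero]; exact mul_ne_zero hd₃ hR
  have hQ := (hasDerivAt_const (0:ℝ) (4 * d₁ * d₂)).div
    (((hy.pow 2).const_add (x ^ 2)).const_mul d₃) hden
  have h := ((hA.exp).const_mul (C₂ / t)).sub hQ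
  erw [h.deriv]
  norm_num
  field_simp
  ring

lemma DXXw (d₁ d₂ d₃ C₂ t x y : ℝ) (ht : t ≠ 0) (hd₃ : d₃ ≠ 0) (hR : x ^ 2 + y ^ 2 ≠ 0) :
    deriv (fun s => -(C₂ * (x + s) / (2 * d₃ * t ^ 2))
          * Real.exp (-((x + s) ^ 2 + y ^ 2) / (4 * d₃ * t))
        + 8 * d₁ * d₂ * (x + s) / (d₃ * ((x + s) ^ 2 + y ^ 2) ^ 2)) 0
      = (-(C₂ / (2 * d₃ * t ^ 2)) + C₂ * x ^ 2 / (4 * d₃ ^ 2 * t ^ 3))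
          * Real.exp (-(x ^ 2 + y ^ 2) / (4 * d₃ * t))
        + 8 * d₁ * d₂ / (d₃ * (x ^ 2 + y ^ 2) ^ 2)
        - 32 * d₁ * d₂ * x ^ 2 / (d₃ * (x ^ 2 + y ^ 2) ^ 3) := by
  have hx : HasDerivAt (fun s : ℝ => x + s) 1 0 := (hasDerivAt_id 0).const_add x
  have hA := (((hx.pow 2).add_const (y ^ 2)).neg).div_const (4 * d₃ * t)
  have hF1 := ((hx.const_mul C₂).div_const (2 * d₃ * t ^ 2)).neg
  have hden : d₃ * ((x + 0) ^ 2 + y ^ 2) ^ 2 ≠ 0 := by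
    simp only [add_zero]; exact mul_ne_zero hd₃ (pow_ne_zero 2 hR)
  have hQ := (hx.const_mul (8 * d₁ * d₂)).div
    ((((hx.pow 2).add_const (y ^ 2)).pow 2).const_mul d₃) hden
  have h := (hF1.mul hA.exp).add hQ
  erw [h.deriv]
  norm_num
  field_simp
  ring

lemma DYYw (d₁ d₂ d₃ C₂ t x y : ℝ) (ht : t ≠ 0) (hd₃ : d₃ ≠ 0) (hR : x ^ 2 + y ^ 2 ≠ 0) :
    deriv (fun s => -(C₂ * (y + s) / (2 * d₃ * t ^ 2))
          * Real.exp (-(x ^ 2 + (y + s) ^ 2) / (4 * d₃ * t))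
        + 8 * d₁ * d₂ * (y + s) / (d₃ * (x ^ 2 + (y + s) ^ 2) ^ 2)) 0
      = (-(C₂ / (2 * d₃ * t ^ 2)) + C₂ * y ^ 2 / (4 * d₃ ^ 2 * t ^ 3))
          * Real.exp (-(x ^ 2 + y ^ 2) / (4 * d₃ * t))
        + 8 * d₁ * d₂ / (d₃ * (x ^ 2 + y ^ 2) ^ 2)
        - 32 * d₁ * d₂ * y ^ 2 / (d₃ * (x ^ 2 + y ^ 2) ^ 3) := by
  have hy : HasDerivAt (fun s : ℝ => y + s) 1 0 := (hasDerivAt_id 0).const_add y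
  have hA := (((hy.pow 2).const_add (x ^ 2)).neg).div_const (4 * d₃ * t)
  have hF1 := ((hy.const_mul C₂).div_const (2 * d₃ * t ^ 2)).neg
  have hden : d₃ * (x ^ 2 + (y + 0) ^ 2) ^ 2 ≠ 0 := by
    simp only [add_zero]; exact mul_ne_zero hd₃ (pow_ne_zero 2 hR)
  have hQ := (hy.const_mul (8 * d₁ * d₂)).div
    (((((hy.pow 2).const_add (x ^ 2))).pow 2).const_mul d₃) hden
  have h := (hF1.mul hA.exp).add hQ
  erw [h.deriv]
  norm_num
  field_simp
  ring
open Real Filter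

lemma Drad (c : ℝ) (q : ℝ × ℝ × ℝ) (hq : q.2 ≠ 0) :
    DifferentiableAt ℝ (fun p : ℝ × ℝ × ℝ => c / (p.2.1 ^ 2 + p.2.2 ^ 2)) q := by
  have hR := Rne q hq
  simp only [div_eq_mul_inv]
  fun_prop (disch := assumption)

lemma Dgx (c : ℝ) (q : ℝ × ℝ × ℝ) (hq : q.2 ≠ 0) :
    DifferentiableAt ℝ (fun p : ℝ × ℝ × ℝ =>
      -(2 * c * p.2.1) / ((p.2.1 ^ 2 + p.2.2 ^ 2) ^ 2)) q := by
  have hR : (q.2.1 ^ 2 + q.2.2 ^ 2) ^ 2 ≠ 0 := pow_ne_zero 2 (Rne q hq)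
  simp only [div_eq_mul_inv]
  fun_prop (disch := assumption)

lemma Dgy (c : ℝ) (q : ℝ × ℝ × ℝ) (hq : q.2 ≠ 0) :
    DifferentiableAt ℝ (fun p : ℝ × ℝ × ℝ =>
      -(2 * c * p.2.2) / ((p.2.1 ^ 2 + p.2.2 ^ 2) ^ 2)) q := by
  have hR : (q.2.1 ^ 2 + q.2.2 ^ 2) ^ 2 ≠ 0 := pow_ne_zero 2 (Rne q hq)
  simp only [div_eq_mul_inv]
  fun_prop (disch := assumption)

lemma pdT_rad (c : ℝ) (q : ℝ × ℝ × ℝ) (hq : q.2 ≠ 0) :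
    pdT (fun p : ℝ × ℝ × ℝ => c / (p.2.1 ^ 2 + p.2.2 ^ 2)) q = 0 := by
  rw [pdT_eq (Drad c q hq)]
  show deriv (fun _ : ℝ => c / (q.2.1 ^ 2 + q.2.2 ^ 2)) 0 = 0
  exact deriv_const _ _

lemma pdX_rad (c : ℝ) (q : ℝ × ℝ × ℝ) (hq : q.2 ≠ 0) :
    pdX (fun p : ℝ × ℝ × ℝ => c / (p.2.1 ^ 2 + p.2.2 ^ 2)) q
      = -(2 * c * q.2.1) / ((q.2.1 ^ 2 + q.2.2 ^ 2) ^ 2) := by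
  rw [pdX_eq (Drad c q hq)]
  exact D1x c q.2.1 q.2.2 (Rne q hq)

lemma pdY_rad (c : ℝ) (q : ℝ × ℝ × ℝ) (hq : q.2 ≠ 0) :
    pdY (fun p : ℝ × ℝ × ℝ => c / (p.2.1 ^ 2 + p.2.2 ^ 2)) q
      = -(2 * c * q.2.2) / ((q.2.1 ^ 2 + q.2.2 ^ 2) ^ 2) := by
  rw [pdY_eq (Drad c q hq)]
  exact D1y c q.2.1 q.2.2 (Rne q hq)

lemma isOpen_ne2 : IsOpen {q : ℝ × ℝ × ℝ | q.2 ≠ 0} :=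
  isOpen_ne_fun continuous_snd continuous_const

lemma pdXX_rad (c : ℝ) (q : ℝ × ℝ × ℝ) (hq : q.2 ≠ 0) :
    pdX (pdX (fun p : ℝ × ℝ × ℝ => c / (p.2.1 ^ 2 + p.2.2 ^ 2))) q
      = (8 * c * q.2.1 ^ 2 - 2 * c * (q.2.1 ^ 2 + q.2.2 ^ 2))
          / ((q.2.1 ^ 2 + q.2.2 ^ 2) ^ 3) := by
  have hev : pdX (fun p : ℝ × ℝ × ℝ => c / (p.2.1 ^ 2 + p.2.2 ^ 2))
      =ᶠ[nhds q] (fun r : ℝ × ℝ × ℝ => -(2 * c * r.2.1) / ((r.2.1 ^ 2 + r.2.2 ^ 2) ^ 2)) :=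
    eventuallyEq_of_mem (isOpen_ne2.mem_nhds hq) (fun r hr => pdX_rad c r hr)
  have h1 : pdX (pdX (fun p : ℝ × ℝ × ℝ => c / (p.2.1 ^ 2 + p.2.2 ^ 2))) q
      = pdX (fun r : ℝ × ℝ × ℝ => -(2 * c * r.2.1) / ((r.2.1 ^ 2 + r.2.2 ^ 2) ^ 2)) q := by
    show fderiv ℝ (pdX fun p : ℝ × ℝ × ℝ => c / (p.2.1 ^ 2 + p.2.2 ^ 2)) q ((0:ℝ),(1:ℝ),(0:ℝ)) = _
    rw [hev.fderiv_eq]; rfl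
  rw [h1, pdX_eq (Dgx c q hq)]
  exact D2x c q.2.1 q.2.2 (Rne q hq)

lemma pdYY_rad (c : ℝ) (q : ℝ × ℝ × ℝ) (hq : q.2 ≠ 0) :
    pdY (pdY (fun p : ℝ × ℝ × ℝ => c / (p.2.1 ^ 2 + p.2.2 ^ 2))) q
      = (8 * c * q.2.2 ^ 2 - 2 * c * (q.2.1 ^ 2 + q.2.2 ^ 2))
          / ((q.2.1 ^ 2 + q.2.2 ^ 2) ^ 3) := by
  have hev : pdY (fun p : ℝ × ℝ × ℝ => c / (p.2.1 ^ 2 + p.2.2 ^ 2))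
      =ᶠ[nhds q] (fun r : ℝ × ℝ × ℝ => -(2 * c * r.2.2) / ((r.2.1 ^ 2 + r.2.2 ^ 2) ^ 2)) :=
    eventuallyEq_of_mem (isOpen_ne2.mem_nhds hq) (fun r hr => pdY_rad c r hr)
  have h1 : pdY (pdY (fun p : ℝ × ℝ × ℝ => c / (p.2.1 ^ 2 + p.2.2 ^ 2))) q
      = pdY (fun r : ℝ × ℝ × ℝ => -(2 * c * r.2.2) / ((r.2.1 ^ 2 + r.2.2 ^ 2) ^ 2)) q := by
    show fderiv ℝ (pdY fun p : ℝ × ℝ × ℝ => c / (p.2.1 ^ 2 + p.2.2 ^ 2)) q ((0:ℝ),(0:ℝ),(1:ℝ)) = _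
    rw [hev.fderiv_eq]; rfl
  rw [h1, pdY_eq (Dgy c q hq)]
  exact D2y c q.2.1 q.2.2 (Rne q hq)

lemma Dw (d₁ d₂ d₃ C₂ : ℝ) (q : ℝ × ℝ × ℝ) (ht : q.1 ≠ 0) (hd₃ : d₃ ≠ 0) (hq : q.2 ≠ 0) :
    DifferentiableAt ℝ (fun p : ℝ × ℝ × ℝ =>
      (C₂ / p.1) * Real.exp (-(p.2.1 ^ 2 + p.2.2 ^ 2) / (4 * d₃ * p.1))
        - 4 * d₁ * d₂ / (d₃ * (p.2.1 ^ 2 + p.2.2 ^ 2))) q := by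
  have h := Rne q hq
  have h1 : d₃ * (q.2.1 ^ 2 + q.2.2 ^ 2) ≠ 0 := mul_ne_zero hd₃ h
  have h2 : (4:ℝ) * d₃ * q.1 ≠ 0 := mul_ne_zero (mul_ne_zero four_ne_zero hd₃) ht
  simp only [div_eq_mul_inv]
  fun_prop (disch := assumption)

lemma Dgwx (d₁ d₂ d₃ C₂ : ℝ) (q : ℝ × ℝ × ℝ) (ht : q.1 ≠ 0) (hd₃ : d₃ ≠ 0) (hq : q.2 ≠ 0) :
    DifferentiableAt ℝ (fun p : ℝ × ℝ × ℝ =>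
      -(C₂ * p.2.1 / (2 * d₃ * p.1 ^ 2)) * Real.exp (-(p.2.1 ^ 2 + p.2.2 ^ 2) / (4 * d₃ * p.1))
        + 8 * d₁ * d₂ * p.2.1 / (d₃ * (p.2.1 ^ 2 + p.2.2 ^ 2) ^ 2)) q := by
  have h := Rne q hq
  have h1 : d₃ * (q.2.1 ^ 2 + q.2.2 ^ 2) ^ 2 ≠ 0 := mul_ne_zero hd₃ (pow_ne_zero 2 h)
  have h2 : (4:ℝ) * d₃ * q.1 ≠ 0 := mul_ne_zero (mul_ne_zero four_ne_zero hd₃) ht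
  have h3 : (2:ℝ) * d₃ * q.1 ^ 2 ≠ 0 := mul_ne_zero (mul_ne_zero two_ne_zero hd₃) (pow_ne_zero 2 ht)
  simp only [div_eq_mul_inv]
  fun_prop (disch := assumption)

lemma Dgwy (d₁ d₂ d₃ C₂ : ℝ) (q : ℝ × ℝ × ℝ) (ht : q.1 ≠ 0) (hd₃ : d₃ ≠ 0) (hq : q.2 ≠ 0) :
    DifferentiableAt ℝ (fun p : ℝ × ℝ × ℝ =>
      -(C₂ * p.2.2 / (2 * d₃ * p.1 ^ 2)) * Real.exp (-(p.2.1 ^ 2 + p.2.2 ^ 2) / (4 * d₃ * p.1))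
        + 8 * d₁ * d₂ * p.2.2 / (d₃ * (p.2.1 ^ 2 + p.2.2 ^ 2) ^ 2)) q := by
  have h := Rne q hq
  have h1 : d₃ * (q.2.1 ^ 2 + q.2.2 ^ 2) ^ 2 ≠ 0 := mul_ne_zero hd₃ (pow_ne_zero 2 h)
  have h2 : (4:ℝ) * d₃ * q.1 ≠ 0 := mul_ne_zero (mul_ne_zero four_ne_zero hd₃) ht
  have h3 : (2:ℝ) * d₃ * q.1 ^ 2 ≠ 0 := mul_ne_zero (mul_ne_zero two_ne_zero hd₃) (pow_ne_zero 2 ht)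
  simp only [div_eq_mul_inv]
  fun_prop (disch := assumption)

lemma pdT_w (d₁ d₂ d₃ C₂ : ℝ) (q : ℝ × ℝ × ℝ) (ht : q.1 ≠ 0) (hd₃ : d₃ ≠ 0) (hq : q.2 ≠ 0) :
    pdT (fun p : ℝ × ℝ × ℝ =>
      (C₂ / p.1) * Real.exp (-(p.2.1 ^ 2 + p.2.2 ^ 2) / (4 * d₃ * p.1))
        - 4 * d₁ * d₂ / (d₃ * (p.2.1 ^ 2 + p.2.2 ^ 2))) q
      = (C₂ * (q.2.1 ^ 2 + q.2.2 ^ 2) / (4 * d₃ * q.1 ^ 3) - C₂ / q.1 ^ 2)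
          * Real.exp (-(q.2.1 ^ 2 + q.2.2 ^ 2) / (4 * d₃ * q.1)) := by
  rw [pdT_eq (Dw d₁ d₂ d₃ C₂ q ht hd₃ hq)]
  exact DTw d₁ d₂ d₃ C₂ q.1 q.2.1 q.2.2 ht hd₃

lemma pdX_w (d₁ d₂ d₃ C₂ : ℝ) (q : ℝ × ℝ × ℝ) (ht : q.1 ≠ 0) (hd₃ : d₃ ≠ 0) (hq : q.2 ≠ 0) :
    pdX (fun p : ℝ × ℝ × ℝ =>
      (C₂ / p.1) * Real.exp (-(p.2.1 ^ 2 + p.2.2 ^ 2) / (4 * d₃ * p.1))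
        - 4 * d₁ * d₂ / (d₃ * (p.2.1 ^ 2 + p.2.2 ^ 2))) q
      = -(C₂ * q.2.1 / (2 * d₃ * q.1 ^ 2)) * Real.exp (-(q.2.1 ^ 2 + q.2.2 ^ 2) / (4 * d₃ * q.1))
          + 8 * d₁ * d₂ * q.2.1 / (d₃ * (q.2.1 ^ 2 + q.2.2 ^ 2) ^ 2) := by
  rw [pdX_eq (Dw d₁ d₂ d₃ C₂ q ht hd₃ hq)]
  exact DXw d₁ d₂ d₃ C₂ q.1 q.2.1 q.2.2 ht hd₃ (Rne q hq)

lemma pdY_w (d₁ d₂ d₃ C₂ : ℝ) (q : ℝ × ℝ × ℝ) (ht : q.1 ≠ 0) (hd₃ : d₃ ≠ 0) (hq : q.2 ≠ 0) :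
    pdY (fun p : ℝ × ℝ × ℝ =>
      (C₂ / p.1) * Real.exp (-(p.2.1 ^ 2 + p.2.2 ^ 2) / (4 * d₃ * p.1))
        - 4 * d₁ * d₂ / (d₃ * (p.2.1 ^ 2 + p.2.2 ^ 2))) q
      = -(C₂ * q.2.2 / (2 * d₃ * q.1 ^ 2)) * Real.exp (-(q.2.1 ^ 2 + q.2.2 ^ 2) / (4 * d₃ * q.1))
          + 8 * d₁ * d₂ * q.2.2 / (d₃ * (q.2.1 ^ 2 + q.2.2 ^ 2) ^ 2) := by
  rw [pdY_eq (Dw d₁ d₂ d₃ C₂ q ht hd₃ hq)]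
  exact DYw d₁ d₂ d₃ C₂ q.1 q.2.1 q.2.2 ht hd₃ (Rne q hq)

lemma isOpen_S : IsOpen {q : ℝ × ℝ × ℝ | 0 < q.1 ∧ q.2 ≠ 0} :=
  (isOpen_lt continuous_const continuous_fst).inter isOpen_ne2

lemma pdXX_w (d₁ d₂ d₃ C₂ : ℝ) (q : ℝ × ℝ × ℝ) (ht : 0 < q.1) (hd₃ : d₃ ≠ 0) (hq : q.2 ≠ 0) :
    pdX (pdX (fun p : ℝ × ℝ × ℝ =>
      (C₂ / p.1) * Real.exp (-(p.2.1 ^ 2 + p.2.2 ^ 2) / (4 * d₃ * p.1))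
        - 4 * d₁ * d₂ / (d₃ * (p.2.1 ^ 2 + p.2.2 ^ 2)))) q
      = (-(C₂ / (2 * d₃ * q.1 ^ 2)) + C₂ * q.2.1 ^ 2 / (4 * d₃ ^ 2 * q.1 ^ 3))
          * Real.exp (-(q.2.1 ^ 2 + q.2.2 ^ 2) / (4 * d₃ * q.1))
        + 8 * d₁ * d₂ / (d₃ * (q.2.1 ^ 2 + q.2.2 ^ 2) ^ 2)
        - 32 * d₁ * d₂ * q.2.1 ^ 2 / (d₃ * (q.2.1 ^ 2 + q.2.2 ^ 2) ^ 3) := by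
  have hev : pdX (fun p : ℝ × ℝ × ℝ =>
        (C₂ / p.1) * Real.exp (-(p.2.1 ^ 2 + p.2.2 ^ 2) / (4 * d₃ * p.1))
          - 4 * d₁ * d₂ / (d₃ * (p.2.1 ^ 2 + p.2.2 ^ 2)))
      =ᶠ[nhds q] (fun r : ℝ × ℝ × ℝ =>
        -(C₂ * r.2.1 / (2 * d₃ * r.1 ^ 2)) * Real.exp (-(r.2.1 ^ 2 + r.2.2 ^ 2) / (4 * d₃ * r.1))
          + 8 * d₁ * d₂ * r.2.1 / (d₃ * (r.2.1 ^ 2 + r.2.2 ^ 2) ^ 2)) :=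
    eventuallyEq_of_mem (isOpen_S.mem_nhds ⟨ht, hq⟩)
      (fun r hr => pdX_w d₁ d₂ d₃ C₂ r hr.1.ne' hd₃ hr.2)
  have h1 : pdX (pdX (fun p : ℝ × ℝ × ℝ =>
        (C₂ / p.1) * Real.exp (-(p.2.1 ^ 2 + p.2.2 ^ 2) / (4 * d₃ * p.1))
          - 4 * d₁ * d₂ / (d₃ * (p.2.1 ^ 2 + p.2.2 ^ 2)))) q
      = pdX (fun r : ℝ × ℝ × ℝ =>
        -(C₂ * r.2.1 / (2 * d₃ * r.1 ^ 2)) * Real.exp (-(r.2.1 ^ 2 + r.2.2 ^ 2) / (4 * d₃ * r.1))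
          + 8 * d₁ * d₂ * r.2.1 / (d₃ * (r.2.1 ^ 2 + r.2.2 ^ 2) ^ 2)) q := by
    show fderiv ℝ (pdX fun p : ℝ × ℝ × ℝ =>
        (C₂ / p.1) * Real.exp (-(p.2.1 ^ 2 + p.2.2 ^ 2) / (4 * d₃ * p.1))
          - 4 * d₁ * d₂ / (d₃ * (p.2.1 ^ 2 + p.2.2 ^ 2))) q ((0:ℝ),(1:ℝ),(0:ℝ)) = _
    rw [hev.fderiv_eq]; rfl
  rw [h1, pdX_eq (Dgwx d₁ d₂ d₃ C₂ q ht.ne' hd₃ hq)]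
  exact DXXw d₁ d₂ d₃ C₂ q.1 q.2.1 q.2.2 ht.ne' hd₃ (Rne q hq)

lemma pdYY_w (d₁ d₂ d₃ C₂ : ℝ) (q : ℝ × ℝ × ℝ) (ht : 0 < q.1) (hd₃ : d₃ ≠ 0) (hq : q.2 ≠ 0) :
    pdY (pdY (fun p : ℝ × ℝ × ℝ =>
      (C₂ / p.1) * Real.exp (-(p.2.1 ^ 2 + p.2.2 ^ 2) / (4 * d₃ * p.1))
        - 4 * d₁ * d₂ / (d₃ * (p.2.1 ^ 2 + p.2.2 ^ 2)))) q
      = (-(C₂ / (2 * d₃ * q.1 ^ 2)) + C₂ * q.2.2 ^ 2 / (4 * d₃ ^ 2 * q.1 ^ 3))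
          * Real.exp (-(q.2.1 ^ 2 + q.2.2 ^ 2) / (4 * d₃ * q.1))
        + 8 * d₁ * d₂ / (d₃ * (q.2.1 ^ 2 + q.2.2 ^ 2) ^ 2)
        - 32 * d₁ * d₂ * q.2.2 ^ 2 / (d₃ * (q.2.1 ^ 2 + q.2.2 ^ 2) ^ 3) := by
  have hev : pdY (fun p : ℝ × ℝ × ℝ =>
        (C₂ / p.1) * Real.exp (-(p.2.1 ^ 2 + p.2.2 ^ 2) / (4 * d₃ * p.1))
          - 4 * d₁ * d₂ / (d₃ * (p.2.1 ^ 2 + p.2.2 ^ 2)))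
      =ᶠ[nhds q] (fun r : ℝ × ℝ × ℝ =>
        -(C₂ * r.2.2 / (2 * d₃ * r.1 ^ 2)) * Real.exp (-(r.2.1 ^ 2 + r.2.2 ^ 2) / (4 * d₃ * r.1))
          + 8 * d₁ * d₂ * r.2.2 / (d₃ * (r.2.1 ^ 2 + r.2.2 ^ 2) ^ 2)) :=
    eventuallyEq_of_mem (isOpen_S.mem_nhds ⟨ht, hq⟩)
      (fun r hr => pdY_w d₁ d₂ d₃ C₂ r hr.1.ne' hd₃ hr.2)
  have h1 : pdY (pdY (fun p : ℝ × ℝ × ℝ =>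
        (C₂ / p.1) * Real.exp (-(p.2.1 ^ 2 + p.2.2 ^ 2) / (4 * d₃ * p.1))
          - 4 * d₁ * d₂ / (d₃ * (p.2.1 ^ 2 + p.2.2 ^ 2)))) q
      = pdY (fun r : ℝ × ℝ × ℝ =>
        -(C₂ * r.2.2 / (2 * d₃ * r.1 ^ 2)) * Real.exp (-(r.2.1 ^ 2 + r.2.2 ^ 2) / (4 * d₃ * r.1))
          + 8 * d₁ * d₂ * r.2.2 / (d₃ * (r.2.1 ^ 2 + r.2.2 ^ 2) ^ 2)) q := by
    show fderiv ℝ (pdY fun p : ℝ × ℝ × ℝ =>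
        (C₂ / p.1) * Real.exp (-(p.2.1 ^ 2 + p.2.2 ^ 2) / (4 * d₃ * p.1))
          - 4 * d₁ * d₂ / (d₃ * (p.2.1 ^ 2 + p.2.2 ^ 2))) q ((0:ℝ),(0:ℝ),(1:ℝ)) = _
    rw [hev.fderiv_eq]; rfl
  rw [h1, pdY_eq (Dgwy d₁ d₂ d₃ C₂ q ht.ne' hd₃ hq)]
  exact DYYw d₁ d₂ d₃ C₂ q.1 q.2.1 q.2.2 ht.ne' hd₃ (Rne q hq)


/-- Nonstationary exact solution with `α = 0`: the functions `u = 4d₂/(x²+y²)`,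
`v = 4d₁/(x²+y²)`, `w = (C₂/t)·exp(−(x²+y²)/(4d₃t)) − 4d₁d₂/(d₃(x²+y²))`
solve the system with stream function `Ψ = F(x²+y²)` for `t > 0`, `(x,y) ≠ (0,0)`. -/
theorem nonstationary_solution_alpha_zero
    (d₁ d₂ d₃ C₂ : ℝ) (hd₃ : d₃ ≠ 0) (F : ℝ → ℝ) (hF : Differentiable ℝ F) :
    SolvesRadial d₁ d₂ d₃ (deriv F)
      (fun p => 4 * d₂ / (p.2.1 ^ 2 + p.2.2 ^ 2))
      (fun p => 4 * d₁ / (p.2.1 ^ 2 + p.2.2 ^ 2))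
      (fun p => (C₂ / p.1) * Real.exp (-(p.2.1 ^ 2 + p.2.2 ^ 2) / (4 * d₃ * p.1))
        - 4 * d₁ * d₂ / (d₃ * (p.2.1 ^ 2 + p.2.2 ^ 2)))
      {p : ℝ × ℝ × ℝ | 0 < p.1 ∧ p.2 ≠ 0} := by
  intro p hp
  obtain ⟨hp1, hp2⟩ := hp
  have ht : p.1 ≠ 0 := hp1.ne'
  have hR : p.2.1 ^ 2 + p.2.2 ^ 2 ≠ 0 := Rne p hp2
  refine ⟨?_, ?_, ?_⟩
  · rw [pdT_rad (4 * d₂) p hp2, pdX_rad (4 * d₂) p hp2, pdY_rad (4 * d₂) p hp2,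
      pdXX_rad (4 * d₂) p hp2, pdYY_rad (4 * d₂) p hp2]
    show (0 : ℝ) + _ = _ - 4 * d₂ / (p.2.1 ^ 2 + p.2.2 ^ 2) * (4 * d₁ / (p.2.1 ^ 2 + p.2.2 ^ 2))
    field_simp
    ring
  · rw [pdT_rad (4 * d₁) p hp2, pdX_rad (4 * d₁) p hp2, pdY_rad (4 * d₁) p hp2,
      pdXX_rad (4 * d₁) p hp2, pdYY_rad (4 * d₁) p hp2]
    show (0 : ℝ) + _ = _ - 4 * d₂ / (p.2.1 ^ 2 + p.2.2 ^ 2) * (4 * d₁ / (p.2.1 ^ 2 + p.2.2 ^ 2))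
    field_simp
    ring
  · rw [pdT_w d₁ d₂ d₃ C₂ p ht hd₃ hp2, pdX_w d₁ d₂ d₃ C₂ p ht hd₃ hp2,
      pdY_w d₁ d₂ d₃ C₂ p ht hd₃ hp2, pdXX_w d₁ d₂ d₃ C₂ p hp1 hd₃ hp2,
      pdYY_w d₁ d₂ d₃ C₂ p hp1 hd₃ hp2]
    show _ = _ + 4 * d₂ / (p.2.1 ^ 2 + p.2.2 ^ 2) * (4 * d₁ / (p.2.1 ^ 2 + p.2.2 ^ 2))
    field_simp
    ring
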